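/- For a bipartite pure state |ψ⟩ = Σ_i √s_i |α_i⟩⊗|β_i⟩ in Schmidt form and any unitary U on H_a, letting Π_k = U|α_k⟩⟨α_k|U† be projectors that leave the reduced state ρ_a invariant, one has tr(ρ · Π(ρ)) = Σ_k (⟨α_k|U† ρ_a U|α_k⟩)², where ρ = |ψ⟩⟨ψ| and ρ_a = Σ_i s_i |α_i⟩⟨α_i|. -/

import Mathlib

open Kronecker ComplexOrder Matrix

section Helpers

variable {m n p : Type*} [Fintype m] [Fintype n] [Fintype p]

omit [Fintype m] [Fintype p] in
lemma myVecMulVec_mul (a : m → ℂ) (b : n → ℂ) (M : Matrix n p ℂ) :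
    vecMulVec a b * M = vecMulVec a (b ᵥ* M) := by
  ext i j
  simp [vecMulVec_apply, mul_apply, vecMul, dotProduct, Finset.mul_sum, mul_assoc]

omit [Fintype m] [Fintype p] in
lemma myMul_vecMulVec (a : n → ℂ) (b : p → ℂ) (M : Matrix m n ℂ) :
    M * vecMulVec a b = vecMulVec (M *ᵥ a) b := by
  ext i j
  simp [vecMulVec_apply, mul_apply, mulVec, dotProduct, Finset.sum_mul, mul_assoc]

omit [Fintype m] [Fintype p] in
lemma myVecMulVec_mul_vecMulVec (a : m → ℂ) (b c : n → ℂ) (d : p → ℂ) :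
    vecMulVec a b * vecMulVec c d = (b ⬝ᵥ c) • vecMulVec a d := by
  ext i j
  simp only [mul_apply, vecMulVec_apply, Matrix.smul_apply, dotProduct, smul_eq_mul,
    Finset.sum_mul, Finset.mul_sum]
  apply Finset.sum_congr rfl; intro k _; ring

lemma myTrace_vecMulVec (a b : m → ℂ) :
    (vecMulVec a b).trace = a ⬝ᵥ b := by
  simp [trace, vecMulVec_apply, dotProduct, diag]

omit [Fintype m] in
lemma myVecMulVec_mulVec (a : m → ℂ) (b v : n → ℂ) :
    vecMulVec a b *ᵥ v = (b ⬝ᵥ v) • a := by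
  ext i
  simp only [mulVec, vecMulVec_apply, dotProduct, Pi.smul_apply, smul_eq_mul,
    Finset.sum_mul]
  apply Finset.sum_congr rfl; intro k _; ring

variable {ι : Type*} [Fintype ι]

lemma mySum_dotProduct (f : ι → m → ℂ) (w : m → ℂ) :
    (∑ i, f i) ⬝ᵥ w = ∑ i, f i ⬝ᵥ w := by
  simp only [dotProduct, Finset.sum_apply, Finset.sum_mul]
  rw [Finset.sum_comm]

lemma myDotProduct_sum (u : m → ℂ) (f : ι → m → ℂ) :
    u ⬝ᵥ (∑ i, f i) = ∑ i, u ⬝ᵥ f i := by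
  simp only [dotProduct, Finset.sum_apply, Finset.mul_sum]
  rw [Finset.sum_comm]

lemma myMulVec_sum (M : Matrix m n ℂ) (f : ι → n → ℂ) :
    M *ᵥ (∑ i, f i) = ∑ i, M *ᵥ f i := by
  ext q
  simp only [mulVec, dotProduct, Finset.sum_apply, Finset.mul_sum]
  rw [Finset.sum_comm]

lemma mySum_mulVec (M : ι → Matrix m n ℂ) (v : n → ℂ) :
    (∑ i, M i) *ᵥ v = ∑ i, M i *ᵥ v := by
  ext q
  simp only [mulVec, dotProduct, Matrix.sum_apply, Finset.sum_apply, Finset.sum_mul]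
  rw [Finset.sum_comm]

lemma kron_sandwich (a b c d : ι → ℂ) (A B : Matrix ι ι ℂ) :
    star (fun p : ι × ι => a p.1 * b p.2) ⬝ᵥ (A ⊗ₖ B) *ᵥ (fun p : ι × ι => c p.1 * d p.2)
      = (star a ⬝ᵥ A *ᵥ c) * (star b ⬝ᵥ B *ᵥ d) := by
  simp only [dotProduct, mulVec, kroneckerMap_apply, Pi.star_apply]
  rw [Finset.sum_mul_sum, Fintype.sum_prod_type]
  apply Finset.sum_congr rfl; intro i _
  apply Finset.sum_congr rfl; intro j _
  simp only [Fintype.sum_prod_type, Finset.mul_sum, Finset.sum_mul]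
  rw [Finset.sum_comm]
  apply Finset.sum_congr rfl; intro x _
  apply Finset.sum_congr rfl; intro y _
  simp only [star_mul']; ring

end Helpers

/-- For a bipartite pure state `|ψ⟩ = Σ_i √s_i |α_i⟩⊗|β_i⟩` in Schmidt form and any
unitary `U` on `H_a`, with measurement projectors `Π_k = U|α_k⟩⟨α_k|U†`,
`tr(ρ · Π(ρ)) = Σ_k (⟨α_k|U† ρ_a U|α_k⟩)²` where `ρ = |ψ⟩⟨ψ|` and
`ρ_a = Σ_i s_i |α_i⟩⟨α_i|`. -/
theorem pure_state_trace_measured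
    {ι : Type*} [Fintype ι] [DecidableEq ι]
    (s : ι → ℝ) (hs : ∀ i, 0 ≤ s i) (hsum : ∑ i, s i = 1)
    (α : ι → ι → ℂ) (β : ι → ι → ℂ)
    (hα : ∀ i j, star (α i) ⬝ᵥ α j = if i = j then 1 else 0)
    (hβ : ∀ i j, star (β i) ⬝ᵥ β j = if i = j then 1 else 0)
    (U : Matrix ι ι ℂ) (hU : U ∈ Matrix.unitaryGroup ι ℂ)
    (ψ : ι × ι → ℂ)
    (hψ : ψ = fun p => ∑ i, (Real.sqrt (s i) : ℂ) * α i p.1 * β i p.2)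
    (ρ : Matrix (ι × ι) (ι × ι) ℂ) (hρ : ρ = vecMulVec ψ (star ψ))
    (ρa : Matrix ι ι ℂ) (hρa : ρa = ∑ i, (s i : ℂ) • vecMulVec (α i) (star (α i)))
    (P : ι → Matrix ι ι ℂ)
    (hP : ∀ k, P k = U * vecMulVec (α k) (star (α k)) * Uᴴ)
    (Pi : Matrix (ι × ι) (ι × ι) ℂ → Matrix (ι × ι) (ι × ι) ℂ)
    (hPi : ∀ X, Pi X = ∑ k, (P k ⊗ₖ (1 : Matrix ι ι ℂ)) * X * (P k ⊗ₖ (1 : Matrix ι ι ℂ))) :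
    (ρ * Pi ρ).trace = ∑ k, (star (α k) ⬝ᵥ (Uᴴ * ρa * U) *ᵥ α k) ^ 2 := by
  -- Step 1: reduce LHS to Σ_k (⟨ψ|Q_k|ψ⟩)²
  have step1 : (ρ * Pi ρ).trace
      = ∑ k, (star ψ ⬝ᵥ (P k ⊗ₖ (1 : Matrix ι ι ℂ)) *ᵥ ψ) ^ 2 := by
    rw [hPi, Finset.mul_sum, trace_sum]
    apply Finset.sum_congr rfl; intro k _
    rw [hρ]
    have e1 : (P k ⊗ₖ (1 : Matrix ι ι ℂ)) * vecMulVec ψ (star ψ)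
        = vecMulVec ((P k ⊗ₖ (1 : Matrix ι ι ℂ)) *ᵥ ψ) (star ψ) := myMul_vecMulVec _ _ _
    have e2 : vecMulVec ((P k ⊗ₖ (1 : Matrix ι ι ℂ)) *ᵥ ψ) (star ψ)
          * (P k ⊗ₖ (1 : Matrix ι ι ℂ))
        = vecMulVec ((P k ⊗ₖ (1 : Matrix ι ι ℂ)) *ᵥ ψ)
            (star ψ ᵥ* (P k ⊗ₖ (1 : Matrix ι ι ℂ))) := myVecMulVec_mul _ _ _
    rw [e1, e2, myVecMulVec_mul_vecMulVec, trace_smul,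
      myTrace_vecMulVec, smul_eq_mul, sq]
    congr 1
    rw [dotProduct_comm, ← dotProduct_mulVec]
  rw [step1]
  apply Finset.sum_congr rfl; intro k _
  congr 1
  have hconj : ∀ i, star ((Real.sqrt (s i) : ℂ)) * (Real.sqrt (s i) : ℂ) = (s i : ℂ) := by
    intro i
    rw [Complex.star_def, Complex.conj_ofReal, ← Complex.ofReal_mul,
      Real.mul_self_sqrt (hs i)]
  -- rewrite ψ as a sum of scaled product states
  have hψ' : ψ = ∑ i, (Real.sqrt (s i) : ℂ) • (fun p : ι × ι => α i p.1 * β i p.2) := by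
    funext q
    rw [hψ]
    simp [Finset.sum_apply, mul_assoc]
  have hstar : star ψ
      = ∑ i, star ((Real.sqrt (s i) : ℂ)) • star (fun p : ι × ι => α i p.1 * β i p.2) := by
    rw [hψ', star_sum]
    simp only [star_smul]
  -- Step 2: ⟨ψ|Q_k|ψ⟩ = Σ_i s_i ⟨α_i|P_k|α_i⟩
  have step2 : star ψ ⬝ᵥ (P k ⊗ₖ (1 : Matrix ι ι ℂ)) *ᵥ ψ
      = ∑ i, (s i : ℂ) * (star (α i) ⬝ᵥ P k *ᵥ α i) := by
    rw [hstar, hψ', myMulVec_sum, mySum_dotProduct]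
    apply Finset.sum_congr rfl; intro i _
    rw [smul_dotProduct, myDotProduct_sum]
    simp only [mulVec_smul, dotProduct_smul, kron_sandwich, one_mulVec, hβ,
      smul_eq_mul, mul_ite, mul_one, mul_zero, Finset.mul_sum]
    rw [Finset.sum_ite_eq, if_pos (Finset.mem_univ i), ← mul_assoc, hconj]
  rw [step2, hρa, Finset.mul_sum, Finset.sum_mul, mySum_mulVec, myDotProduct_sum]
  apply Finset.sum_congr rfl; intro i _
  rw [hP k]
  have lhs_eq : star (α i) ⬝ᵥ (U * vecMulVec (α k) (star (α k)) * Uᴴ) *ᵥ α i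
      = (star (α k) ⬝ᵥ Uᴴ *ᵥ α i) * (star (α i) ⬝ᵥ U *ᵥ α k) := by
    rw [← mulVec_mulVec, ← mulVec_mulVec, myVecMulVec_mulVec, mulVec_smul,
      dotProduct_smul, smul_eq_mul]
  have rhs_eq : star (α k) ⬝ᵥ (Uᴴ * ((s i : ℂ) • vecMulVec (α i) (star (α i))) * U) *ᵥ α k
      = (s i : ℂ) * ((star (α i) ⬝ᵥ U *ᵥ α k) * (star (α k) ⬝ᵥ Uᴴ *ᵥ α i)) := by
    rw [mul_smul_comm, smul_mul_assoc, smul_mulVec, dotProduct_smul, smul_eq_mul,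
      ← mulVec_mulVec, ← mulVec_mulVec, myVecMulVec_mulVec, mulVec_smul,
      dotProduct_smul, smul_eq_mul]
  rw [lhs_eq, rhs_eq]
  ring
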